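/- Let wA = (1, −1, −1, −1, −1, 1, −1, −1) ∈ ℂ^8 and wB = (1, 1, −1, 1, −1, −1, −1, 1) ∈ ℂ^8. Then for every ψ ∈ ℝ, the total array factor is perfectly flat: |wAᵀ a_8(ψ)|² + |wBᵀ a_8(ψ)|² = 16. -/

import Mathlib

open Finset

/-- Steering vector of an `N`-element uniform linear array at electrical angle `ψ`:
`(a_N(ψ))_n = exp(i n ψ)`. -/
noncomputable def steer (N : ℕ) (ψ : ℝ) : Fin N → ℂ :=
  fun n => Complex.exp (Complex.I * ((n : ℕ) : ℂ) * (ψ : ℂ))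

/-- Bilinear dot product `wᵀ a = ∑ n, w n * a n`. -/
noncomputable def dotp {N : ℕ} (w a : Fin N → ℂ) : ℂ := ∑ n, w n * a n

theorem eight_element_asi_weights_flat_array_factor
    (wA wB : Fin 8 → ℂ)
    (hA : wA = ![1, -1, -1, -1, -1, 1, -1, -1])
    (hB : wB = ![1, 1, -1, 1, -1, -1, -1, 1])
    (ψ : ℝ) :
    ‖dotp wA (steer 8 ψ)‖ ^ 2 + ‖dotp wB (steer 8 ψ)‖ ^ 2 = 16 := by
  subst hA hB
  set z : ℂ := Complex.exp (Complex.I * ψ) with hzdef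
  set c : ℂ := Complex.exp (-(Complex.I * ψ)) with hcdef
  have hw : z * c = 1 := by
    rw [hzdef, hcdef, ← Complex.exp_add]
    simp
  have hst : ∀ n : Fin 8, steer 8 ψ n = z ^ (n : ℕ) := by
    intro n
    simp only [steer, hzdef, ← Complex.exp_nat_mul]
    congr 1
    ring
  have hconj : (starRingEnd ℂ) z = c := by
    rw [hzdef, hcdef, ← Complex.exp_conj]
    congr 1
    simp [Complex.conj_ofReal]
  have hA : dotp ![1, -1, -1, -1, -1, 1, -1, -1] (steer 8 ψ)
      = 1 - z - z^2 - z^3 - z^4 + z^5 - z^6 - z^7 := by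
    simp [dotp, Fin.sum_univ_eight, hst,
      show (![1, -1, -1, -1, -1, 1, -1, -1] : Fin 8 → ℂ) 5 = 1 from rfl,
      show (![1, -1, -1, -1, -1, 1, -1, -1] : Fin 8 → ℂ) 6 = -1 from rfl,
      show (![1, -1, -1, -1, -1, 1, -1, -1] : Fin 8 → ℂ) 7 = -1 from rfl,
      show ((3 : Fin 8) : ℕ) = 3 from rfl, show ((4 : Fin 8) : ℕ) = 4 from rfl,
      show ((5 : Fin 8) : ℕ) = 5 from rfl, show ((6 : Fin 8) : ℕ) = 6 from rfl,
      show ((7 : Fin 8) : ℕ) = 7 from rfl]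
    ring
  have hB : dotp ![1, 1, -1, 1, -1, -1, -1, 1] (steer 8 ψ)
      = 1 + z - z^2 + z^3 - z^4 - z^5 - z^6 + z^7 := by
    simp [dotp, Fin.sum_univ_eight, hst,
      show (![1, 1, -1, 1, -1, -1, -1, 1] : Fin 8 → ℂ) 5 = -1 from rfl,
      show (![1, 1, -1, 1, -1, -1, -1, 1] : Fin 8 → ℂ) 6 = -1 from rfl,
      show (![1, 1, -1, 1, -1, -1, -1, 1] : Fin 8 → ℂ) 7 = 1 from rfl,
      show ((3 : Fin 8) : ℕ) = 3 from rfl, show ((4 : Fin 8) : ℕ) = 4 from rfl,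
      show ((5 : Fin 8) : ℕ) = 5 from rfl, show ((6 : Fin 8) : ℕ) = 6 from rfl,
      show ((7 : Fin 8) : ℕ) = 7 from rfl]
    ring
  have key : ∀ w : ℂ, ‖w‖ ^ 2 = (w * (starRingEnd ℂ) w).re := by
    intro w
    rw [Complex.mul_conj, Complex.ofReal_re]
    exact Complex.sq_norm w
  rw [hA, hB, key, key]
  have e1 : (starRingEnd ℂ) (1 - z - z^2 - z^3 - z^4 + z^5 - z^6 - z^7)
      = 1 - c - c^2 - c^3 - c^4 + c^5 - c^6 - c^7 := by
    simp [map_sub, map_add, map_pow, hconj]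
  have e2 : (starRingEnd ℂ) (1 + z - z^2 + z^3 - z^4 - z^5 - z^6 + z^7)
      = 1 + c - c^2 + c^3 - c^4 - c^5 - c^6 + c^7 := by
    simp [map_sub, map_add, map_pow, hconj]
  rw [e1, e2, ← Complex.add_re]
  have main : (1 - z - z^2 - z^3 - z^4 + z^5 - z^6 - z^7) *
      (1 - c - c^2 - c^3 - c^4 + c^5 - c^6 - c^7) +
      (1 + z - z^2 + z^3 - z^4 - z^5 - z^6 + z^7) *
      (1 + c - c^2 + c^3 - c^4 - c^5 - c^6 + c^7) = 16 := by
    linear_combination (14 + 2*c^2 + 2*c^4 + 2*c^6 + 12*z*c + 4*z*c^5 + 2*z^2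
      + 10*z^2*c^2 - 2*z^2*c^4 + 2*z^2*c^6 + 8*z^3*c^3 + 2*z^4 - 2*z^4*c^2
      + 6*z^4*c^4 - 2*z^4*c^6 + 4*z^5*c + 4*z^5*c^5 + 2*z^6 + 2*z^6*c^2
      - 2*z^6*c^4 + 2*z^6*c^6) * hw
  rw [main]
  norm_num
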